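/- arXiv:1302.1511 — 4 statements merged into one kernel-verified Lean document; each statement's English description precedes it below -/
import Mathlib

section
/- Let L ≥ 1, w ≥ 1, d_r ≥ 2 be integers with L ≥ 2w − 1, let ε ∈ [0,1) and β ≥ 0 be reals, and let P_L be the associated L×L matrix with c = (d_r − 1)·exp(−β(1−ε)). Then P_L has a real eigenvalue μ (a real μ with a nonzero v ∈ ℝ^L satisfying P_L v = μ v) with μ ≥ c · (1 − (w−1)(w+1)/(3wL)). -/
open Finset in
private lemma stmt6_sub1 (w m : ℕ) : 2 * (∑ k ∈ range (m+1), (w - k)) + (w - 1 - m) * (w - m) = w^2 + w := by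
  induction m with
  | zero =>
    cases w with
    | zero => simp
    | succ n =>
      simp only [zero_add, Finset.sum_range_one, Nat.sub_zero, Nat.add_sub_cancel]
      have : (n+1)^2 = n*(n+1) + (n+1) := by ring
      omega
  | succ m ih =>
    rw [Finset.sum_range_succ]
    have key : 2 * (w - (m+1)) + (w - 1 - (m+1)) * (w - (m+1)) = (w - 1 - m) * (w - m) := by
      rcases le_or_gt w (m+1) with h | h
      · have h1 : w - (m+1) = 0 := by omega
        rcases eq_or_lt_of_le h with h2 | h2
        · have : w - 1 - m = 0 := by omega
          simp [h1, this]
        · have : w - m = 0 := by omega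
          simp [h1, this]
      · zify [show m+1 ≤ w by omega, show m+1 ≤ w-1 by omega, show m ≤ w-1 by omega,
          show m ≤ w by omega, show 1 ≤ w by omega]
        ring
    omega

open Finset in
private lemma stmt6_rowsum (w a b : ℕ) :
    2 * (∑ j ∈ range (a + b + 1), (w - Nat.dist a j))
      + (w - 1 - a) * (w - a) + (w - 1 - b) * (w - b) = 2 * w^2 := by
  have hsplit : ∑ j ∈ range (a + (b + 1)), (w - Nat.dist a j)
      = (∑ j ∈ range a, (w - Nat.dist a j)) + ∑ j ∈ range (b+1), (w - Nat.dist a (a + j)) :=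
    Finset.sum_range_add _ a (b+1)
  have hleft : ∑ j ∈ range a, (w - Nat.dist a j) = (∑ k ∈ range (a+1), (w - k)) - w := by
    rw [← Finset.sum_range_reflect]
    have h1 : ∀ j ∈ range a, w - Nat.dist a (a - 1 - j) = w - (j+1) := by
      intro j hj
      rw [Finset.mem_range] at hj
      rw [Nat.dist_eq_sub_of_le_right (by omega)]
      congr 1; omega
    rw [Finset.sum_congr rfl h1, Finset.sum_range_succ' (fun k => w - k) a]
    simp
  have hright : ∑ j ∈ range (b+1), (w - Nat.dist a (a + j)) = ∑ k ∈ range (b+1), (w - k) := by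
    apply Finset.sum_congr rfl
    intro j _
    rw [Nat.dist_eq_sub_of_le (by omega)]
    congr 1; omega
  have ga := stmt6_sub1 w a
  have gb := stmt6_sub1 w b
  have hw : w ≤ ∑ k ∈ range (a+1), (w - k) := by
    calc w = w - 0 := by omega
    _ ≤ _ := Finset.single_le_sum (f := fun k => w - k) (by intro i _; omega) (by simp)
  have hL : a + b + 1 = a + (b + 1) := by omega
  rw [hL, hsplit, hleft, hright]
  generalize (w - 1 - a) * (w - a) = A at *
  generalize (w - 1 - b) * (w - b) = B at *
  generalize w^2 = W at *
  omega

open Finset in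
private lemma stmt6_tetra (w : ℕ) : 3 * (∑ i ∈ range w, i * (i+1)) + w = w^3 := by
  induction w with
  | zero => simp
  | succ w ih =>
    rw [Finset.sum_range_succ]
    have e1 : (w+1)^3 = w^3 + 3*(w*(w+1)) + 1 := by ring
    generalize hC : w^3 = C at *
    generalize hD : w*(w+1) = D at *
    omega

open Finset in
private lemma stmt6_tetra' (w : ℕ) : 3 * (∑ i ∈ range w, (w - 1 - i) * (w - i)) + w = w^3 := by
  rw [← Finset.sum_range_reflect]
  have h1 : ∀ i ∈ range w, (w - 1 - (w - 1 - i)) * (w - (w - 1 - i)) = i * (i+1) := by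
    intro i hi
    rw [Finset.mem_range] at hi
    congr 1 <;> omega
  rw [Finset.sum_congr rfl h1]
  exact stmt6_tetra w

open Finset in
private lemma stmt6_total (w L : ℕ) (hwL : w ≤ L) :
    6 * (∑ i ∈ range L, ∑ j ∈ range L, (w - Nat.dist i j)) + 2*(w^3) = 6 * w^2 * L + 2*w := by
  have hrow : ∀ i ∈ range L,
      2 * (∑ j ∈ range L, (w - Nat.dist i j))
        = 2 * w^2 - (w - 1 - i) * (w - i) - (w - 1 - (L-1-i)) * (w - (L-1-i)) := by
    intro i hi
    rw [Finset.mem_range] at hi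
    have := stmt6_rowsum w i (L - 1 - i)
    rw [show i + (L-1-i) + 1 = L by omega] at this
    omega
  have hF : ∑ i ∈ range L, (w - 1 - i) * (w - i) = ∑ i ∈ range w, (w - 1 - i) * (w - i) := by
    symm
    apply Finset.sum_subset (Finset.range_subset_range.2 hwL)
    intro i _ hiw
    rw [Finset.mem_range, not_lt] at hiw
    have : w - 1 - i = 0 := by omega
    simp [this]
  have hF2 : ∑ i ∈ range L, (w - 1 - (L-1-i)) * (w - (L-1-i))
      = ∑ i ∈ range L, (w - 1 - i) * (w - i) := by
    rw [← Finset.sum_range_reflect (fun i => (w - 1 - i) * (w - i)) L]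
  -- combine
  have h2N : 2 * (∑ i ∈ range L, ∑ j ∈ range L, (w - Nat.dist i j))
      + (∑ i ∈ range L, (w - 1 - i) * (w - i))
      + (∑ i ∈ range L, (w - 1 - (L-1-i)) * (w - (L-1-i))) = 2 * w^2 * L := by
    rw [Finset.mul_sum, Finset.sum_congr rfl hrow]
    have hle : ∀ i ∈ range L, (w - 1 - i) * (w - i) + (w - 1 - (L-1-i)) * (w - (L-1-i)) ≤ 2*w^2 := by
      intro i hi
      rw [Finset.mem_range] at hi
      have := stmt6_rowsum w i (L - 1 - i)
      omega
    rw [← Finset.sum_add_distrib, ← Finset.sum_add_distrib]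
    rw [show (2:ℕ) * w^2 * L = ∑ _i ∈ range L, 2 * w^2 by
      rw [Finset.sum_const, Finset.card_range]; ring]
    apply Finset.sum_congr rfl
    intro i hi
    have := hle i hi
    omega
  have := stmt6_tetra' w
  rw [hF2, hF] at h2N
  generalize hS : ∑ i ∈ range L, ∑ j ∈ range L, (w - Nat.dist i j) = N at *
  generalize hT : ∑ i ∈ range w, (w - 1 - i) * (w - i) = F at *
  generalize w^3 = C at *
  rw [show (2:ℕ)*w^2*L = 2*(w^2*L) by ring] at h2N
  rw [show (6:ℕ)*w^2*L = 6*(w^2*L) by ring]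
  generalize hW : w^2*L = Y at *
  omega

/-- The Jacobian matrix `P_L` of density evolution at the zero fixed point:
`(P_L)_{i,j} = c (w - |i-j|)/w²` for `|i-j| ≤ w` and `0` otherwise, where
`c = (d_r - 1) exp(-β(1-ε))`. -/
noncomputable def PL (L w dr : ℕ) (ε β : ℝ) : Matrix (Fin L) (Fin L) ℝ :=
  fun i j =>
    if |((i : ℕ) : ℝ) - ((j : ℕ) : ℝ)| ≤ (w : ℝ) then
      ((dr : ℝ) - 1) * Real.exp (-β * (1 - ε)) *
        ((w : ℝ) - |((i : ℕ) : ℝ) - ((j : ℕ) : ℝ)|) / (w : ℝ) ^ 2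
    else 0

open Finset in
/-- for `L ≥ 2w - 1`, `P_L` has a real eigenvalue
`μ ≥ c (1 - (w-1)(w+1)/(3wL))` with `c = (d_r - 1) exp(-β(1-ε))`. -/
theorem stmt_6 (L w dr : ℕ) (hL : 1 ≤ L) (hw : 1 ≤ w) (hdr : 2 ≤ dr)
    (hLw : 2 * w - 1 ≤ L) (ε β : ℝ) (hε : ε ∈ Set.Ico (0 : ℝ) 1) (hβ : 0 ≤ β) :
    ∃ (μ : ℝ) (v : Fin L → ℝ), v ≠ 0 ∧ (PL L w dr ε β).mulVec v = μ • v ∧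
      ((dr : ℝ) - 1) * Real.exp (-β * (1 - ε)) *
        (1 - ((w : ℝ) - 1) * ((w : ℝ) + 1) / (3 * (w : ℝ) * (L : ℝ))) ≤ μ := by
  set c : ℝ := ((dr : ℝ) - 1) * Real.exp (-β * (1 - ε)) with hc
  have hcpos : 0 < c := by
    apply mul_pos _ (Real.exp_pos _)
    have : (2:ℝ) ≤ (dr:ℝ) := by exact_mod_cast hdr
    linarith
  have hwpos : (0:ℝ) < (w:ℝ) := by exact_mod_cast hw
  have hLpos : (0:ℝ) < (L:ℝ) := by exact_mod_cast hL
  have hwL : w ≤ L := by omega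
  have hdist : ∀ i j : ℕ, |((i:ℕ):ℝ) - ((j:ℕ):ℝ)| = ((Nat.dist i j : ℕ) : ℝ) := by
    intro i j
    rcases le_total i j with h | h
    · rw [Nat.dist_eq_sub_of_le h, Nat.cast_sub h, abs_sub_comm,
        abs_of_nonneg (sub_nonneg.2 (Nat.cast_le.2 h))]
    · rw [Nat.dist_eq_sub_of_le_right h, Nat.cast_sub h,
        abs_of_nonneg (sub_nonneg.2 (Nat.cast_le.2 h))]
  have hentry : ∀ i j : Fin L,
      PL L w dr ε β i j = c * ((w - Nat.dist (i:ℕ) (j:ℕ) : ℕ) : ℝ) / (w:ℝ)^2 := by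
    intro i j
    show (if _ then _ else _) = _
    rw [hdist (i:ℕ) (j:ℕ)]
    split_ifs with h
    · have hd : Nat.dist (i:ℕ) (j:ℕ) ≤ w := by exact_mod_cast h
      rw [Nat.cast_sub hd]
    · have hd : w ≤ Nat.dist (i:ℕ) (j:ℕ) := by
        by_contra hcon
        push_neg at hcon
        exact h (by exact_mod_cast hcon.le)
      rw [Nat.sub_eq_zero_of_le hd]
      simp
  have hherm : (PL L w dr ε β).IsHermitian := by
    ext i j
    simp only [Matrix.conjTranspose_apply, star_trivial]
    rw [hentry, hentry, Nat.dist_comm]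
  haveI : Nonempty (Fin L) := ⟨⟨0, hL⟩⟩
  set E := EuclideanSpace ℝ (Fin L) with hE
  set T : E →ₗ[ℝ] E := Matrix.toEuclideanLin (PL L w dr ε β) with hT
  have hsym : T.IsSymmetric := Matrix.isHermitian_iff_isSymmetric.mp hherm
  have hev := hsym.hasEigenvalue_iSup_of_finiteDimensional
  obtain ⟨v, hv⟩ := hev.exists_hasEigenvector
  refine ⟨⨆ x : {x : E // x ≠ 0}, RCLike.re (inner ℝ (T x) (x : E)) / ‖(x : E)‖^2, v.ofLp, ?_, ?_, ?_⟩
  · intro h; apply hv.2; ext i; simpa using congrFun h i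
  · have := congrArg WithLp.ofLp hv.apply_eq_smul
    exact this
  -- lower bound via Rayleigh quotient at the all-ones vector
  set one : E := WithLp.toLp 2 (fun _ => (1:ℝ)) with hone_def
  have hone : one ≠ 0 := by
    intro h0
    have := congrArg (fun x : E => x ⟨0, hL⟩) h0
    simp [hone_def] at this
  have hbdd : BddAbove (Set.range fun x : {x : E // x ≠ 0} =>
      RCLike.re (inner ℝ (T x) (x : E)) / ‖(x : E)‖^2) := by
    set T' := LinearMap.toContinuousLinearMap T with hT'
    refine ⟨‖T'‖, ?_⟩
    rintro y ⟨x, rfl⟩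
    have hx : (0:ℝ) < ‖(x:E)‖^2 := by
      have : ‖(x:E)‖ ≠ 0 := norm_ne_zero_iff.2 x.2
      positivity
    rw [div_le_iff₀ hx]
    have h1 : (inner ℝ (T x) (x:E)) ≤ ‖T ↑x‖ * ‖(x:E)‖ := real_inner_le_norm _ _
    have h2 : ‖T ↑x‖ ≤ ‖T'‖ * ‖(x:E)‖ := T'.le_opNorm _
    have h3 : (0:ℝ) ≤ ‖(x:E)‖ := norm_nonneg _
    simp only [RCLike.re_to_real]
    nlinarith
  have hle := le_ciSup hbdd (⟨one, hone⟩ : {x : E // x ≠ 0})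
  refine le_trans ?_ hle
  -- compute the Rayleigh quotient at `one`
  have hTone : ∀ i, T one i = ∑ j, PL L w dr ε β i j := by
    intro i
    show ((PL L w dr ε β).mulVec (fun _ => (1:ℝ))) i = _
    simp [Matrix.mulVec, dotProduct]
  have hinner : (inner ℝ (T one) one) = ∑ i, ∑ j, PL L w dr ε β i j := by
    rw [PiLp.inner_apply]
    simp only [RCLike.inner_apply, RCLike.conj_to_real]
    refine Finset.sum_congr rfl fun i _ => ?_
    rw [hTone i]
    simp [hone_def]
  have hnorm : ‖one‖^2 = (L:ℝ) := by
    rw [← real_inner_self_eq_norm_sq, PiLp.inner_apply]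
    simp [hone_def, RCLike.inner_apply]
  -- evaluate the double sum
  set N : ℕ := ∑ i ∈ range L, ∑ j ∈ range L, (w - Nat.dist i j) with hN
  have hw0 : (w:ℝ) ≠ 0 := ne_of_gt hwpos
  have hL0 : (L:ℝ) ≠ 0 := ne_of_gt hLpos
  have e1 : ∀ i : Fin L, ∑ j, PL L w dr ε β i j
      = c * (∑ j ∈ range L, ((w - Nat.dist (i:ℕ) j : ℕ):ℝ)) / (w:ℝ)^2 := by
    intro i
    rw [Finset.sum_congr rfl fun j _ => hentry i j]
    rw [← Fin.sum_univ_eq_sum_range (fun j => ((w - Nat.dist (i:ℕ) j : ℕ):ℝ)) L]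
    rw [Finset.mul_sum, Finset.sum_div]
  have hsum : (∑ i, ∑ j, PL L w dr ε β i j) = c * (N:ℝ) / (w:ℝ)^2 := by
    have e2 : (N:ℝ) = ∑ i ∈ range L, ∑ j ∈ range L, ((w - Nat.dist i j : ℕ):ℝ) := by
      rw [hN]; push_cast; rfl
    rw [e2, Finset.mul_sum, Finset.sum_div,
      ← Fin.sum_univ_eq_sum_range
        (fun i => c * (∑ j ∈ range L, ((w - Nat.dist i j : ℕ):ℝ)) / (w:ℝ)^2) L]
    exact Finset.sum_congr rfl fun i _ => e1 i
  rw [hinner, hnorm, hsum]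
  simp only [RCLike.re_to_real]
  -- final arithmetic
  have htot : 6 * ((N:ℝ)) + 2*((w:ℝ))^3 = 6 * (w:ℝ)^2 * (L:ℝ) + 2*(w:ℝ) := by
    have := stmt6_total w L hwL
    exact_mod_cast congrArg (fun n : ℕ => (n:ℝ)) this
  have hNval : (N:ℝ) = ((w:ℝ)^2*(L:ℝ)*3 - (w:ℝ)^3 + (w:ℝ))/3 := by linarith
  have heq : c * (1 - ((w : ℝ) - 1) * ((w : ℝ) + 1) / (3 * (w : ℝ) * (L : ℝ)))
      = c * (N:ℝ) / (w:ℝ)^2 / (L:ℝ) := by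
    rw [hNval]
    field_simp
    ring
  rw [heq]
end

section
/- (Core of Theorem 1.) Let L ≥ 1, w ≥ 1, d_r ≥ 2 be integers with L ≥ 2w − 1, let ε ∈ [0,1) and β ≥ 0 be reals, and let P_L be the associated L×L matrix with c = (d_r − 1)·exp(−β(1−ε)). If every real eigenvalue μ of P_L satisfies μ < 1, then (d_r − 1)·exp(−β(1−ε))·(1 − (w−1)(w+1)/(3wL)) < 1; equivalently, β > (1/(1−ε)) · ln[(d_r − 1)·(1 − (w−1)(w+1)/(3wL))]. -/
lemma sumA (w : ℕ) : ∀ L : ℕ,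
    if L < w then 2 * (∑ k ∈ Finset.range L, (w - (k+1))) + L*(L+1) = 2*L*w
    else 2 * (∑ k ∈ Finset.range L, (w - (k+1))) + w = w*w := by
  intro L
  induction L with
  | zero =>
    simp only [Finset.sum_range_zero]
    split_ifs with h
    · simp
    · have : w = 0 := by omega
      simp [this]
  | succ L ih =>
    rw [Finset.sum_range_succ]
    split_ifs with h
    · rw [if_pos (by omega : L < w)] at ih
      obtain ⟨d, rfl⟩ : ∃ d, w = L + 2 + d := ⟨w - (L+2), by omega⟩
      rw [show L + 2 + d - (L + 1) = d + 1 by omega]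
      zify at ih ⊢
      linear_combination ih
    · rw [show w - (L+1) = 0 by omega, Nat.add_zero]
      rcases Nat.lt_or_ge L w with h2 | h2
      · obtain rfl : w = L + 1 := by omega
        rw [if_pos (by omega : L < L + 1)] at ih
        zify at ih ⊢
        linear_combination ih
      · rw [if_neg (by omega : ¬ L < w)] at ih
        exact ih

lemma sumB (w : ℕ) : ∀ L : ℕ,
    if L < w then
      3 * (∑ i ∈ Finset.range L, ∑ j ∈ Finset.range L, (w - (i-j) - (j-i))) + L*L*L
        = 3*L*L*w + L
    else
      3 * (∑ i ∈ Finset.range L, ∑ j ∈ Finset.range L, (w - (i-j) - (j-i))) + w*w*w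
        = 3*L*w*w + w := by
  intro L
  induction L with
  | zero =>
    simp only [Finset.sum_range_zero]
    split_ifs with h
    · simp
    · have : w = 0 := by omega
      simp [this]
  | succ L ih =>
    have expand : ∑ i ∈ Finset.range (L+1), ∑ j ∈ Finset.range (L+1), (w - (i-j) - (j-i))
        = (∑ i ∈ Finset.range L, ∑ j ∈ Finset.range L, (w - (i-j) - (j-i)))
          + 2 * (∑ k ∈ Finset.range L, (w - (k+1))) + w := by
      rw [Finset.sum_range_succ]
      have h1 : ∀ i ∈ Finset.range L, ∑ j ∈ Finset.range (L+1), (w - (i-j) - (j-i))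
          = (∑ j ∈ Finset.range L, (w - (i-j) - (j-i))) + (w - (L - i)) := by
        intro i hi
        rw [Finset.sum_range_succ]
        congr 1
        have : i - L = 0 := by simp at hi; omega
        omega
      rw [Finset.sum_congr rfl h1, Finset.sum_add_distrib, Finset.sum_range_succ]
      have h2 : ∑ j ∈ Finset.range L, (w - (L-j) - (j-L))
          = ∑ j ∈ Finset.range L, (w - (L - j)) := by
        apply Finset.sum_congr rfl
        intro j hj
        have : j - L = 0 := by simp at hj; omega
        omega
      have h3 : ∑ j ∈ Finset.range L, (w - (L - j)) = ∑ k ∈ Finset.range L, (w - (k+1)) := by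
        rw [← Finset.sum_range_reflect (fun k => w - (k+1)) L]
        apply Finset.sum_congr rfl
        intro j hj
        simp at hj
        congr 1
        omega
      have h4 : ∑ i ∈ Finset.range L, (w - (L - i)) = ∑ k ∈ Finset.range L, (w - (k+1)) := by
        rw [← h3]
      omega
    rw [expand]
    have hA := sumA w L
    split_ifs with h
    · rw [if_pos (by omega : L < w)] at ih hA
      zify at ih hA ⊢
      linear_combination ih + 3 * hA
    · rcases Nat.lt_or_ge L w with h2 | h2
      · obtain rfl : w = L + 1 := by omega
        rw [if_pos (by omega : L < L + 1)] at ih hA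
        zify at ih hA ⊢
        linear_combination ih + 3 * hA
      · rw [if_neg (by omega : ¬ L < w)] at ih hA
        zify at ih hA ⊢
        linear_combination ih + 3 * hA

lemma PL_apply (L w dr : ℕ) (ε β : ℝ) (i j : Fin L) :
    PL L w dr ε β i j = ((dr : ℝ) - 1) * Real.exp (-β * (1 - ε)) *
      (((w - ((i : ℕ) - (j : ℕ)) - ((j : ℕ) - (i : ℕ)) : ℕ) : ℝ)) / (w : ℝ) ^ 2 := by
  unfold PL
  rcases le_total (i : ℕ) (j : ℕ) with hab | hab
  · have habs : |((i : ℕ) : ℝ) - ((j : ℕ) : ℝ)| = (((j : ℕ) - (i : ℕ) : ℕ) : ℝ) := by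
      rw [abs_sub_comm, Nat.cast_sub hab]
      exact abs_of_nonneg (by simp [sub_nonneg, Nat.cast_le, hab])
    rw [habs]
    by_cases hbw : (j : ℕ) - (i : ℕ) ≤ w
    · rw [if_pos (by exact_mod_cast hbw)]
      congr 1
      congr 1
      rw [show w - ((i:ℕ) - (j:ℕ)) - ((j:ℕ) - (i:ℕ)) = w - ((j:ℕ) - (i:ℕ)) by omega,
        Nat.cast_sub hbw]
    · rw [if_neg (by exact_mod_cast hbw)]
      rw [show w - ((i:ℕ) - (j:ℕ)) - ((j:ℕ) - (i:ℕ)) = 0 by omega]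
      simp
  · have habs : |((i : ℕ) : ℝ) - ((j : ℕ) : ℝ)| = (((i : ℕ) - (j : ℕ) : ℕ) : ℝ) := by
      rw [Nat.cast_sub hab]
      exact abs_of_nonneg (by simp [sub_nonneg, Nat.cast_le, hab])
    rw [habs]
    by_cases hbw : (i : ℕ) - (j : ℕ) ≤ w
    · rw [if_pos (by exact_mod_cast hbw)]
      congr 1
      congr 1
      rw [show w - ((i:ℕ) - (j:ℕ)) - ((j:ℕ) - (i:ℕ)) = w - ((i:ℕ) - (j:ℕ)) by omega,
        Nat.cast_sub hbw]
    · rw [if_neg (by exact_mod_cast hbw)]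
      rw [show w - ((i:ℕ) - (j:ℕ)) - ((j:ℕ) - (i:ℕ)) = 0 by omega]
      simp

lemma PL_isHermitian (L w dr : ℕ) (ε β : ℝ) : (PL L w dr ε β).IsHermitian := by
  ext i j
  simp only [Matrix.conjTranspose_apply, star_trivial]
  unfold PL
  rw [abs_sub_comm (((j : ℕ) : ℝ))]

set_option maxHeartbeats 1000000 in
/-- core of Theorem 1: if every real eigenvalue of `P_L` is
less than 1 (stability of the zero fixed point), then
`(d_r-1)exp(-β(1-ε))(1-(w-1)(w+1)/(3wL)) < 1`; equivalently
`β > (1/(1-ε)) ln[(d_r-1)(1-(w-1)(w+1)/(3wL))]`. -/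
theorem stmt_7 (L w dr : ℕ) (hL : 1 ≤ L) (hw : 1 ≤ w) (hdr : 2 ≤ dr)
    (hLw : 2 * w - 1 ≤ L) (ε β : ℝ) (hε : ε ∈ Set.Ico (0 : ℝ) 1) (hβ : 0 ≤ β)
    (hstab : ∀ (μ : ℝ) (v : Fin L → ℝ), v ≠ 0 →
      (PL L w dr ε β).mulVec v = μ • v → μ < 1) :
    ((dr : ℝ) - 1) * Real.exp (-β * (1 - ε)) *
        (1 - ((w : ℝ) - 1) * ((w : ℝ) + 1) / (3 * (w : ℝ) * (L : ℝ))) < 1 ∧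
    β > (1 / (1 - ε)) *
        Real.log (((dr : ℝ) - 1) *
          (1 - ((w : ℝ) - 1) * ((w : ℝ) + 1) / (3 * (w : ℝ) * (L : ℝ)))) := by
  obtain ⟨hε0, hε1⟩ := hε
  have h1ε : (0:ℝ) < 1 - ε := by linarith
  have hwR : (0:ℝ) < w := by exact_mod_cast hw
  have hLR : (0:ℝ) < L := by exact_mod_cast hL
  have hwL : w ≤ L := by omega
  have hwLR : (w:ℝ) ≤ L := by exact_mod_cast hwL
  set c : ℝ := ((dr : ℝ) - 1) * Real.exp (-β * (1 - ε)) with hc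
  have hdrR : (2:ℝ) ≤ dr := by exact_mod_cast hdr
  have hc0 : 0 < c := mul_pos (by linarith) (Real.exp_pos _)
  set A := PL L w dr ε β with hA
  have hherm : A.IsHermitian := PL_isHermitian L w dr ε β
  -- eigenvalues are < 1
  have hlam : ∀ k, hherm.eigenvalues k < 1 := fun k =>
    hstab _ _ (by simpa using hherm.eigenvectorBasis.orthonormal.ne_zero k) (hherm.mulVec_eigenvectorBasis k)
  -- the eigenvector unitary
  set V : Matrix (Fin L) (Fin L) ℝ := (hherm.eigenvectorUnitary : Matrix (Fin L) (Fin L) ℝ)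
    with hV
  have hVV : V * star V = 1 := Matrix.mem_unitaryGroup_iff.mp hherm.eigenvectorUnitary.2
  have horth : ∀ i j : Fin L, (∑ k, V i k * V j k) = if i = j then (1:ℝ) else 0 := by
    intro i j
    have := congrFun (congrFun hVV i) j
    simp only [Matrix.mul_apply, Matrix.star_apply, star_trivial, Matrix.one_apply] at this
    simpa using this
  -- entrywise spectral theorem
  have hA_entry : ∀ i j : Fin L, A i j = ∑ k, hherm.eigenvalues k * (V i k * V j k) := by
    intro i j
    conv_lhs => rw [hherm.spectral_theorem, Unitary.conjStarAlgAut_apply]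
    simp only [Matrix.mul_apply, Matrix.diagonal_apply, Matrix.star_apply, star_trivial,
      Function.comp_apply, RCLike.ofReal_real_eq_id, id_eq, mul_ite, mul_zero,
      Finset.sum_ite_eq', Finset.mem_univ, if_true]
    exact Finset.sum_congr rfl fun k _ => by ring
  -- coordinate sums of eigenvectors
  have hQ1 : ∑ i, ∑ j, A i j
      = ∑ k, hherm.eigenvalues k * (∑ i, V i k)^2 := by
    simp only [hA_entry]
    calc ∑ i, ∑ j, ∑ k, hherm.eigenvalues k * (V i k * V j k)
        = ∑ i, ∑ k, ∑ j, hherm.eigenvalues k * (V i k * V j k) :=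
          Finset.sum_congr rfl fun i _ => Finset.sum_comm
      _ = ∑ k, ∑ i, ∑ j, hherm.eigenvalues k * (V i k * V j k) := Finset.sum_comm
      _ = ∑ k, hherm.eigenvalues k * (∑ i, V i k)^2 := by
          refine Finset.sum_congr rfl fun k _ => ?_
          rw [pow_two, Finset.sum_mul_sum, Finset.mul_sum]
          exact Finset.sum_congr rfl fun i _ => by rw [Finset.mul_sum]
  have hQ2 : ∑ k, (∑ i, V i k)^2 = (L : ℝ) := by
    calc ∑ k, (∑ i, V i k)^2
        = ∑ k, ∑ i, ∑ j, V i k * V j k := by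
          refine Finset.sum_congr rfl fun k _ => ?_
          rw [pow_two, Finset.sum_mul_sum]
      _ = ∑ i, ∑ k, ∑ j, V i k * V j k := Finset.sum_comm
      _ = ∑ i, ∑ j, ∑ k, V i k * V j k :=
          Finset.sum_congr rfl fun i _ => Finset.sum_comm
      _ = ∑ i : Fin L, ∑ j : Fin L, if i = j then (1:ℝ) else 0 := by
          exact Finset.sum_congr rfl fun i _ => Finset.sum_congr rfl fun j _ => horth i j
      _ = (L : ℝ) := by simp [Finset.sum_ite_eq, Finset.card_univ]
  -- strict inequality for the total sum
  have hlt : ∑ i, ∑ j, A i j < (L : ℝ) := by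
    rw [hQ1]
    obtain ⟨k0, -, hk0⟩ := Finset.exists_ne_zero_of_sum_ne_zero
      (by rw [hQ2]; positivity : ∑ k, (∑ i, V i k)^2 ≠ 0)
    have hk0' : 0 < (∑ i, V i k0)^2 :=
      lt_of_le_of_ne (sq_nonneg _) (Ne.symm hk0)
    calc ∑ k, hherm.eigenvalues k * (∑ i, V i k)^2
        < ∑ k, (∑ i, V i k)^2 := by
          refine Finset.sum_lt_sum (fun k _ => ?_) ⟨k0, Finset.mem_univ k0, ?_⟩
          · nlinarith [sq_nonneg (∑ i, V i k), hlam k]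
          · nlinarith [hlam k0, hk0']
      _ = (L : ℝ) := hQ2
  -- compute the total sum of entries
  have hNat : ∑ i : Fin L, ∑ j : Fin L, (w - ((i:ℕ)-(j:ℕ)) - ((j:ℕ)-(i:ℕ)))
      = ∑ i ∈ Finset.range L, ∑ j ∈ Finset.range L, (w - (i-j) - (j-i)) := by
    rw [← Fin.sum_univ_eq_sum_range (fun i => ∑ j ∈ Finset.range L, (w - (i-j) - (j-i)))]
    exact Finset.sum_congr rfl fun i _ =>
      Fin.sum_univ_eq_sum_range (fun j => w - ((i:ℕ)-j) - (j-(i:ℕ))) L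
  set S : ℕ := ∑ i ∈ Finset.range L, ∑ j ∈ Finset.range L, (w - (i-j) - (j-i)) with hSdef
  have hS : 3 * S + w*w*w = 3*L*w*w + w := by
    have := sumB w L
    rwa [if_neg (by omega)] at this
  have hQS : ∑ i, ∑ j, A i j = c * (S:ℝ) / (w:ℝ)^2 := by
    have h1 : ∀ i j : Fin L, A i j
        = c * (((w - ((i:ℕ)-(j:ℕ)) - ((j:ℕ)-(i:ℕ)) : ℕ)):ℝ) / (w:ℝ)^2 := by
      intro i j
      rw [hc]
      exact PL_apply L w dr ε β i j
    calc ∑ i, ∑ j, A i j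
        = ∑ i : Fin L, ∑ j : Fin L,
            c * (((w - ((i:ℕ)-(j:ℕ)) - ((j:ℕ)-(i:ℕ)) : ℕ)):ℝ) / (w:ℝ)^2 := by
          exact Finset.sum_congr rfl fun i _ => Finset.sum_congr rfl fun j _ => h1 i j
      _ = c * (∑ i : Fin L, ∑ j : Fin L,
            (((w - ((i:ℕ)-(j:ℕ)) - ((j:ℕ)-(i:ℕ)) : ℕ)):ℝ)) / (w:ℝ)^2 := by
          rw [Finset.mul_sum, Finset.sum_div]
          exact Finset.sum_congr rfl fun i _ => by rw [Finset.mul_sum, Finset.sum_div]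
      _ = c * (S:ℝ) / (w:ℝ)^2 := by
          rw [← hNat, Nat.cast_sum]
          congr 1
          congr 1
          exact Finset.sum_congr rfl fun i _ => (Nat.cast_sum _ _).symm
  have hmain : c * (S:ℝ) / (w:ℝ)^2 < (L:ℝ) := by rw [← hQS]; exact hlt
  have hSR : (3:ℝ) * (S:ℝ) + (w:ℝ)*(w:ℝ)*(w:ℝ) = 3*(L:ℝ)*(w:ℝ)*(w:ℝ) + (w:ℝ) := by
    exact_mod_cast hS
  have hSval : (S:ℝ) = (L:ℝ)*(w:ℝ)^2 - ((w:ℝ)^3 - (w:ℝ))/3 := by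
    nlinarith [hSR]
  have goal1 : c * (1 - ((w : ℝ) - 1) * ((w : ℝ) + 1) / (3 * (w : ℝ) * (L : ℝ))) < 1 := by
    have key : c * (1 - ((w : ℝ) - 1) * ((w : ℝ) + 1) / (3 * (w : ℝ) * (L : ℝ))) * L
        = c * (S:ℝ) / (w:ℝ)^2 := by
      rw [hSval]
      field_simp
      ring
    have h2 : c * (1 - ((w : ℝ) - 1) * ((w : ℝ) + 1) / (3 * (w : ℝ) * (L : ℝ))) * L < L := by
      rw [key]; exact hmain
    nlinarith [h2, hLR]
  refine ⟨goal1, ?_⟩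
  -- second inequality
  have hfrac1 : ((w:ℝ)-1)*((w:ℝ)+1)/(3*(w:ℝ)*(L:ℝ)) < 1 := by
    rw [div_lt_one (by positivity)]
    nlinarith [hwLR, hwR]
  set X : ℝ := ((dr:ℝ)-1) * (1 - ((w:ℝ)-1)*((w:ℝ)+1)/(3*(w:ℝ)*(L:ℝ))) with hX
  have hX0 : 0 < X := mul_pos (by linarith) (by linarith)
  have hXe : X * Real.exp (-β*(1-ε)) < 1 := by
    calc X * Real.exp (-β*(1-ε))
        = c * (1 - ((w : ℝ) - 1) * ((w : ℝ) + 1) / (3 * (w : ℝ) * (L : ℝ))) := by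
          rw [hX, hc]; ring
      _ < 1 := goal1
  have hXlt : X < Real.exp (β*(1-ε)) := by
    rw [show -β*(1-ε) = -(β*(1-ε)) by ring, Real.exp_neg] at hXe
    have hee : (Real.exp (β*(1-ε)))⁻¹ * Real.exp (β*(1-ε)) = 1 :=
      inv_mul_cancel₀ (ne_of_gt (Real.exp_pos _))
    nlinarith [hXe, Real.exp_pos (β*(1-ε)), hee]
  have hlog : Real.log X < β * (1-ε) := (Real.log_lt_iff_lt_exp hX0).mpr hXlt
  calc (1/(1-ε)) * Real.log X
      < (1/(1-ε)) * (β*(1-ε)) := by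
        exact mul_lt_mul_of_pos_left hlog (by positivity)
    _ = β := by field_simp
end

section
/- (Monotonicity of density evolution.) Fix integers L ≥ 1, w ≥ 1, d_l ≥ 2, d_r ≥ 2, d_g ≥ 2 and reals ε ∈ [0,1], β ≥ 0, and let p^{(ℓ)}, s^{(ℓ)} : ℤ → ℝ be the density evolution sequences. Then for every ℓ ≥ 0 and every i ∈ ℤ, 0 ≤ p_i^{(ℓ+1)} ≤ p_i^{(ℓ)} ≤ 1 and 0 ≤ s_i^{(ℓ+1)} ≤ s_i^{(ℓ)} ≤ 1. In particular the error probability P_b^{(ℓ)} = (1/L)·∑_{i=0}^{L−1} p_i^{(ℓ)} is nonincreasing in ℓ and converges as ℓ → ∞. -/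
lemma de_avg_nonneg (w : ℕ) (f : ℕ → ℝ)
    (h0 : ∀ j ∈ Finset.range w, 0 ≤ f j) :
    0 ≤ (1 / (w : ℝ)) * ∑ j ∈ Finset.range w, f j :=
  mul_nonneg (by positivity) (Finset.sum_nonneg h0)

lemma de_avg_le_one (w : ℕ) (hw : 1 ≤ w) (f : ℕ → ℝ)
    (h1 : ∀ j ∈ Finset.range w, f j ≤ 1) :
    (1 / (w : ℝ)) * ∑ j ∈ Finset.range w, f j ≤ 1 := by
  have hwpos : (0:ℝ) < w := by exact_mod_cast Nat.lt_of_lt_of_le Nat.zero_lt_one hw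
  have hs : ∑ j ∈ Finset.range w, f j ≤ (w : ℝ) := by
    calc ∑ j ∈ Finset.range w, f j ≤ ∑ _j ∈ Finset.range w, (1:ℝ) :=
          Finset.sum_le_sum h1
      _ = (w : ℝ) := by simp
  calc (1/(w:ℝ)) * ∑ j ∈ Finset.range w, f j ≤ (1/(w:ℝ)) * w :=
        mul_le_mul_of_nonneg_left hs (by positivity)
    _ = 1 := by field_simp

lemma de_avg_mono (w : ℕ) (f g : ℕ → ℝ)
    (h : ∀ j ∈ Finset.range w, f j ≤ g j) :
    (1 / (w : ℝ)) * ∑ j ∈ Finset.range w, f j ≤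
      (1 / (w : ℝ)) * ∑ j ∈ Finset.range w, g j :=
  mul_le_mul_of_nonneg_left (Finset.sum_le_sum h) (by positivity)

noncomputable def dePP (w dr : ℕ) (q : ℤ → ℝ) (i : ℤ) : ℝ :=
  (1 / (w : ℝ)) * ∑ j ∈ Finset.range w,
    (1 - (1 - (1 / (w : ℝ)) * ∑ k ∈ Finset.range w,
      q (i + (j : ℤ) - (k : ℤ))) ^ (dr - 1))

noncomputable def deEE (w dg : ℕ) (ε β : ℝ) (t : ℤ → ℝ) (i : ℤ) : ℝ :=
  Real.exp (-β * (1 - (1 / (w : ℝ)) * ∑ j ∈ Finset.range w,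
    (1 - (1 - ε) * (1 - (1 / (w : ℝ)) * ∑ k ∈ Finset.range w,
      t (i + (j : ℤ) - (k : ℤ))) ^ (dg - 1))))

lemma dePP_mem (w dr : ℕ) (hw : 1 ≤ w) (q : ℤ → ℝ)
    (hq : ∀ i, 0 ≤ q i ∧ q i ≤ 1) (i : ℤ) :
    0 ≤ dePP w dr q i ∧ dePP w dr q i ≤ 1 := by
  have hA : ∀ j : ℕ, 0 ≤ (1/(w:ℝ)) * ∑ k ∈ Finset.range w, q (i + (j:ℤ) - (k:ℤ)) ∧
      (1/(w:ℝ)) * ∑ k ∈ Finset.range w, q (i + (j:ℤ) - (k:ℤ)) ≤ 1 := fun j =>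
    ⟨de_avg_nonneg w _ (fun k _ => (hq _).1),
     de_avg_le_one w hw _ (fun k _ => (hq _).2)⟩
  have hterm : ∀ j ∈ Finset.range w,
      (0:ℝ) ≤ 1 - (1 - (1/(w:ℝ)) * ∑ k ∈ Finset.range w, q (i + (j:ℤ) - (k:ℤ))) ^ (dr-1) ∧
      1 - (1 - (1/(w:ℝ)) * ∑ k ∈ Finset.range w, q (i + (j:ℤ) - (k:ℤ))) ^ (dr-1) ≤ 1 := by
    intro j _
    have h1 := (hA j).1
    have h2 := (hA j).2
    have hp0 : (0:ℝ) ≤ (1 - (1/(w:ℝ)) * ∑ k ∈ Finset.range w, q (i + (j:ℤ) - (k:ℤ))) ^ (dr-1) :=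
      pow_nonneg (by linarith) _
    have hp1 : (1 - (1/(w:ℝ)) * ∑ k ∈ Finset.range w, q (i + (j:ℤ) - (k:ℤ))) ^ (dr-1) ≤ 1 :=
      pow_le_one₀ (by linarith) (by linarith)
    constructor <;> linarith
  exact ⟨de_avg_nonneg w _ (fun j hj => (hterm j hj).1),
    de_avg_le_one w hw _ (fun j hj => (hterm j hj).2)⟩

lemma dePP_mono (w dr : ℕ) (hw : 1 ≤ w) (q q' : ℤ → ℝ)
    (hq' : ∀ i, 0 ≤ q' i ∧ q' i ≤ 1) (hle : ∀ i, q i ≤ q' i) (i : ℤ) :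
    dePP w dr q i ≤ dePP w dr q' i := by
  apply de_avg_mono
  intro j _
  have hA : (1/(w:ℝ)) * ∑ k ∈ Finset.range w, q (i + (j:ℤ) - (k:ℤ)) ≤
      (1/(w:ℝ)) * ∑ k ∈ Finset.range w, q' (i + (j:ℤ) - (k:ℤ)) :=
    de_avg_mono w _ _ (fun k _ => hle _)
  have hA' : (1/(w:ℝ)) * ∑ k ∈ Finset.range w, q' (i + (j:ℤ) - (k:ℤ)) ≤ 1 :=
    de_avg_le_one w hw _ (fun k _ => (hq' _).2)
  have := pow_le_pow_left₀ (by linarith :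
      (0:ℝ) ≤ 1 - (1/(w:ℝ)) * ∑ k ∈ Finset.range w, q' (i + (j:ℤ) - (k:ℤ)))
    (by linarith : 1 - (1/(w:ℝ)) * ∑ k ∈ Finset.range w, q' (i + (j:ℤ) - (k:ℤ)) ≤
      1 - (1/(w:ℝ)) * ∑ k ∈ Finset.range w, q (i + (j:ℤ) - (k:ℤ))) (dr-1)
  linarith

lemma deEE_mem (w dg : ℕ) (hw : 1 ≤ w) (ε β : ℝ) (hε : ε ∈ Set.Icc (0:ℝ) 1)
    (hβ : 0 ≤ β) (t : ℤ → ℝ) (ht : ∀ i, 0 ≤ t i ∧ t i ≤ 1) (i : ℤ) :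
    0 < deEE w dg ε β t i ∧ deEE w dg ε β t i ≤ 1 := by
  refine ⟨Real.exp_pos _, Real.exp_le_one_iff.mpr ?_⟩
  have hB : (1/(w:ℝ)) * ∑ j ∈ Finset.range w,
      (1 - (1-ε) * (1 - (1/(w:ℝ)) * ∑ k ∈ Finset.range w, t (i + (j:ℤ) - (k:ℤ))) ^ (dg-1)) ≤ 1 := by
    apply de_avg_le_one w hw
    intro j _
    have hS0 : 0 ≤ (1/(w:ℝ)) * ∑ k ∈ Finset.range w, t (i + (j:ℤ) - (k:ℤ)) :=
      de_avg_nonneg w _ (fun k _ => (ht _).1)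
    have hS1 : (1/(w:ℝ)) * ∑ k ∈ Finset.range w, t (i + (j:ℤ) - (k:ℤ)) ≤ 1 :=
      de_avg_le_one w hw _ (fun k _ => (ht _).2)
    have : (0:ℝ) ≤ (1-ε) * (1 - (1/(w:ℝ)) * ∑ k ∈ Finset.range w, t (i + (j:ℤ) - (k:ℤ))) ^ (dg-1) :=
      mul_nonneg (by linarith [hε.2]) (pow_nonneg (by linarith) _)
    linarith
  nlinarith

lemma deEE_mono (w dg : ℕ) (hw : 1 ≤ w) (ε β : ℝ) (hε : ε ∈ Set.Icc (0:ℝ) 1)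
    (hβ : 0 ≤ β) (t t' : ℤ → ℝ) (ht' : ∀ i, 0 ≤ t' i ∧ t' i ≤ 1)
    (hle : ∀ i, t i ≤ t' i) (i : ℤ) :
    deEE w dg ε β t i ≤ deEE w dg ε β t' i := by
  apply Real.exp_le_exp.mpr
  have hB : (1/(w:ℝ)) * ∑ j ∈ Finset.range w,
      (1 - (1-ε) * (1 - (1/(w:ℝ)) * ∑ k ∈ Finset.range w, t (i + (j:ℤ) - (k:ℤ))) ^ (dg-1)) ≤
      (1/(w:ℝ)) * ∑ j ∈ Finset.range w,
      (1 - (1-ε) * (1 - (1/(w:ℝ)) * ∑ k ∈ Finset.range w, t' (i + (j:ℤ) - (k:ℤ))) ^ (dg-1)) := by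
    apply de_avg_mono
    intro j _
    have hS : (1/(w:ℝ)) * ∑ k ∈ Finset.range w, t (i + (j:ℤ) - (k:ℤ)) ≤
        (1/(w:ℝ)) * ∑ k ∈ Finset.range w, t' (i + (j:ℤ) - (k:ℤ)) :=
      de_avg_mono w _ _ (fun k _ => hle _)
    have hS1 : (1/(w:ℝ)) * ∑ k ∈ Finset.range w, t' (i + (j:ℤ) - (k:ℤ)) ≤ 1 :=
      de_avg_le_one w hw _ (fun k _ => (ht' _).2)
    have h0' : (0:ℝ) ≤ 1 - (1/(w:ℝ)) * ∑ k ∈ Finset.range w, t' (i + (j:ℤ) - (k:ℤ)) := by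
      linarith
    have hle' : 1 - (1/(w:ℝ)) * ∑ k ∈ Finset.range w, t' (i + (j:ℤ) - (k:ℤ)) ≤
        1 - (1/(w:ℝ)) * ∑ k ∈ Finset.range w, t (i + (j:ℤ) - (k:ℤ)) := by linarith
    have hpow := pow_le_pow_left₀ h0' hle' (dg-1)
    nlinarith [hε.2]
  nlinarith

/-- monotonicity of density evolution: the density evolution
sequences `p, s` of the `(d_l, d_r, d_g, L, w)` spatially-coupled precoded
rateless code over BEC(ε) (with `Λ(x) = exp(-β(1-x))`) satisfy
`0 ≤ p_i^{(ℓ+1)} ≤ p_i^{(ℓ)} ≤ 1` and `0 ≤ s_i^{(ℓ+1)} ≤ s_i^{(ℓ)} ≤ 1`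
for all `ℓ ≥ 0` and `i ∈ ℤ`; in particular the error probability
`P_b^{(ℓ)} = (1/L) ∑_{i=0}^{L-1} p_i^{(ℓ)}` is nonincreasing in `ℓ` and
converges as `ℓ → ∞`. -/
theorem stmt_15 (L w dl dr dg : ℕ) (hL : 1 ≤ L) (hw : 1 ≤ w) (hdl : 2 ≤ dl)
    (hdr : 2 ≤ dr) (hdg : 2 ≤ dg) (ε β : ℝ) (hε : ε ∈ Set.Icc (0 : ℝ) 1)
    (hβ : 0 ≤ β) (p s : ℕ → ℤ → ℝ)
    (hout : ∀ ℓ : ℕ, ∀ i : ℤ, (i < 0 ∨ (L : ℤ) ≤ i) → p ℓ i = 0 ∧ s ℓ i = 0)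
    (hinit : ∀ i : ℤ, 0 ≤ i → i < (L : ℤ) → p 0 i = 1 ∧ s 0 i = 1)
    (hrec : ∀ ℓ : ℕ, ∀ i : ℤ, 0 ≤ i → i < (L : ℤ) →
      p (ℓ + 1) i =
        ((1 / (w : ℝ)) * ∑ j ∈ Finset.range w,
            (1 - (1 - (1 / (w : ℝ)) * ∑ k ∈ Finset.range w,
              p ℓ (i + (j : ℤ) - (k : ℤ))) ^ (dr - 1))) ^ (dl - 1) *
          Real.exp (-β * (1 - (1 / (w : ℝ)) * ∑ j ∈ Finset.range w,
            (1 - (1 - ε) * (1 - (1 / (w : ℝ)) * ∑ k ∈ Finset.range w,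
              s ℓ (i + (j : ℤ) - (k : ℤ))) ^ (dg - 1)))) ∧
      s (ℓ + 1) i =
        ((1 / (w : ℝ)) * ∑ j ∈ Finset.range w,
            (1 - (1 - (1 / (w : ℝ)) * ∑ k ∈ Finset.range w,
              p ℓ (i + (j : ℤ) - (k : ℤ))) ^ (dr - 1))) ^ dl *
          Real.exp (-β * (1 - (1 / (w : ℝ)) * ∑ j ∈ Finset.range w,
            (1 - (1 - ε) * (1 - (1 / (w : ℝ)) * ∑ k ∈ Finset.range w,
              s ℓ (i + (j : ℤ) - (k : ℤ))) ^ (dg - 1))))) :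
    (∀ ℓ : ℕ, ∀ i : ℤ,
      (0 ≤ p (ℓ + 1) i ∧ p (ℓ + 1) i ≤ p ℓ i ∧ p ℓ i ≤ 1) ∧
      (0 ≤ s (ℓ + 1) i ∧ s (ℓ + 1) i ≤ s ℓ i ∧ s ℓ i ≤ 1)) ∧
    (∀ ℓ : ℕ,
      (1 / (L : ℝ)) * ∑ i ∈ Finset.range L, p (ℓ + 1) (i : ℤ) ≤
        (1 / (L : ℝ)) * ∑ i ∈ Finset.range L, p ℓ (i : ℤ)) ∧
    (∃ l : ℝ, Filter.Tendsto
      (fun ℓ : ℕ => (1 / (L : ℝ)) * ∑ i ∈ Finset.range L, p ℓ (i : ℤ))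
      Filter.atTop (nhds l)) := by
  -- rewrite the recursion in terms of dePP / deEE
  have hrec' : ∀ ℓ : ℕ, ∀ i : ℤ, 0 ≤ i → i < (L : ℤ) →
      p (ℓ + 1) i = (dePP w dr (p ℓ) i) ^ (dl - 1) * deEE w dg ε β (s ℓ) i ∧
      s (ℓ + 1) i = (dePP w dr (p ℓ) i) ^ dl * deEE w dg ε β (s ℓ) i := by
    intro ℓ i h0 h1
    simpa [dePP, deEE] using hrec ℓ i h0 h1
  -- bounds
  have key : ∀ ℓ : ℕ, ∀ i : ℤ, (0 ≤ p ℓ i ∧ p ℓ i ≤ 1) ∧ (0 ≤ s ℓ i ∧ s ℓ i ≤ 1) := by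
    intro ℓ
    induction ℓ with
    | zero =>
      intro i
      by_cases hi : i < 0 ∨ (L : ℤ) ≤ i
      · obtain ⟨h1, h2⟩ := hout 0 i hi
        rw [h1, h2]; norm_num
      · push_neg at hi
        obtain ⟨h1, h2⟩ := hinit i hi.1 hi.2
        rw [h1, h2]; norm_num
    | succ n ih =>
      intro i
      by_cases hi : i < 0 ∨ (L : ℤ) ≤ i
      · obtain ⟨h1, h2⟩ := hout (n + 1) i hi
        rw [h1, h2]; norm_num
      · push_neg at hi
        obtain ⟨hp, hs⟩ := hrec' n i hi.1 hi.2
        have hP := dePP_mem w dr hw (p n) (fun j => (ih j).1) i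
        have hE := deEE_mem w dg hw ε β hε hβ (s n) (fun j => (ih j).2) i
        have hPn1 : 0 ≤ (dePP w dr (p n) i) ^ (dl - 1) := pow_nonneg hP.1 _
        have hPn2 : 0 ≤ (dePP w dr (p n) i) ^ dl := pow_nonneg hP.1 _
        have hP1 : (dePP w dr (p n) i) ^ (dl - 1) ≤ 1 := pow_le_one₀ hP.1 hP.2
        have hP2 : (dePP w dr (p n) i) ^ dl ≤ 1 := pow_le_one₀ hP.1 hP.2
        rw [hp, hs]
        constructor
        · exact ⟨mul_nonneg hPn1 hE.1.le,
            le_trans (mul_le_mul hP1 hE.2 hE.1.le zero_le_one) (by norm_num)⟩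
        · exact ⟨mul_nonneg hPn2 hE.1.le,
            le_trans (mul_le_mul hP2 hE.2 hE.1.le zero_le_one) (by norm_num)⟩
  -- monotonicity
  have mono : ∀ ℓ : ℕ, ∀ i : ℤ, p (ℓ + 1) i ≤ p ℓ i ∧ s (ℓ + 1) i ≤ s ℓ i := by
    intro ℓ
    induction ℓ with
    | zero =>
      intro i
      by_cases hi : i < 0 ∨ (L : ℤ) ≤ i
      · rw [(hout 1 i hi).1, (hout 0 i hi).1, (hout 1 i hi).2, (hout 0 i hi).2]
        exact ⟨le_refl _, le_refl _⟩
      · push_neg at hi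
        obtain ⟨h1, h2⟩ := hinit i hi.1 hi.2
        rw [h1, h2]
        exact ⟨(key 1 i).1.2, (key 1 i).2.2⟩
    | succ n ih =>
      intro i
      by_cases hi : i < 0 ∨ (L : ℤ) ≤ i
      · rw [(hout (n+2) i hi).1, (hout (n+1) i hi).1,
            (hout (n+2) i hi).2, (hout (n+1) i hi).2]
        exact ⟨le_refl _, le_refl _⟩
      · push_neg at hi
        obtain ⟨hp2, hs2⟩ := hrec' (n + 1) i hi.1 hi.2
        obtain ⟨hp1, hs1⟩ := hrec' n i hi.1 hi.2
        have hPold := dePP_mem w dr hw (p n) (fun j => (key n j).1) i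
        have hPnew := dePP_mem w dr hw (p (n+1)) (fun j => (key (n+1) j).1) i
        have hEold := deEE_mem w dg hw ε β hε hβ (s n) (fun j => (key n j).2) i
        have hEnew := deEE_mem w dg hw ε β hε hβ (s (n+1)) (fun j => (key (n+1) j).2) i
        have hPmono : dePP w dr (p (n+1)) i ≤ dePP w dr (p n) i :=
          dePP_mono w dr hw _ _ (fun j => (key n j).1) (fun j => (ih j).1) i
        have hEmono : deEE w dg ε β (s (n+1)) i ≤ deEE w dg ε β (s n) i :=
          deEE_mono w dg hw ε β hε hβ _ _ (fun j => (key n j).2) (fun j => (ih j).2) i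
        rw [hp2, hp1, hs2, hs1]
        constructor
        · exact mul_le_mul (pow_le_pow_left₀ hPnew.1 hPmono _) hEmono hEnew.1.le
            (pow_nonneg hPold.1 _)
        · exact mul_le_mul (pow_le_pow_left₀ hPnew.1 hPmono _) hEmono hEnew.1.le
            (pow_nonneg hPold.1 _)
  have hPb : ∀ ℓ : ℕ,
      (1 / (L : ℝ)) * ∑ i ∈ Finset.range L, p (ℓ + 1) (i : ℤ) ≤
        (1 / (L : ℝ)) * ∑ i ∈ Finset.range L, p ℓ (i : ℤ) := fun ℓ =>
    mul_le_mul_of_nonneg_left (Finset.sum_le_sum fun i _ => (mono ℓ (i : ℤ)).1)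
      (by positivity)
  refine ⟨fun ℓ i => ⟨⟨(key (ℓ+1) i).1.1, (mono ℓ i).1, (key ℓ i).1.2⟩,
    ⟨(key (ℓ+1) i).2.1, (mono ℓ i).2, (key ℓ i).2.2⟩⟩, hPb, ?_⟩
  have hanti : Antitone (fun ℓ : ℕ => (1 / (L : ℝ)) * ∑ i ∈ Finset.range L, p ℓ (i : ℤ)) :=
    antitone_nat_of_succ_le hPb
  have hbdd : BddBelow (Set.range
      (fun ℓ : ℕ => (1 / (L : ℝ)) * ∑ i ∈ Finset.range L, p ℓ (i : ℤ))) := by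
    refine ⟨0, ?_⟩
    rintro x ⟨ℓ, rfl⟩
    exact mul_nonneg (by positivity) (Finset.sum_nonneg fun i _ => (key ℓ (i : ℤ)).1.1)
  exact ⟨_, tendsto_atTop_ciInf hanti hbdd⟩
end

section
/- (Jacobian of density evolution at the zero fixed point, d_l = 2.) Fix integers L ≥ 1, w ≥ 1, d_r ≥ 2, d_g ≥ 2, reals ε ∈ [0,1], β ≥ 0, and set d_l = 2. For i ∈ {0,…,L−1} let F_i : ℝ^L × ℝ^L → ℝ be the density evolution update map. Then for every j ∈ {0,…,L−1}, the partial derivative of F_i with respect to p_j at the point (p, s) = (0, 0) equals (d_r − 1)·exp(−β(1−ε))·(w − |i − j|)/w² if |i − j| ≤ w, and 0 if |i − j| > w. -/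
/-- Extension of a vector indexed by `Fin L` to a function on `ℤ` by zero
outside `{0, …, L-1}`. -/
noncomputable def extZ (L : ℕ) (v : Fin L → ℝ) (i : ℤ) : ℝ :=
  ∑ k : Fin L, if ((k : ℕ) : ℤ) = i then v k else 0

/-- Density evolution update map `F_i(p, s) = B_i(p)^{d_l-1} Λ(A_i(s))` of the
`(d_l, d_r, d_g, L, w)` spatially-coupled precoded rateless code over BEC(ε),
with `Λ(x) = exp(-β(1-x))`. -/
noncomputable def Fmap (L w dl dr dg : ℕ) (ε β : ℝ) (i : Fin L)
    (ps : (Fin L → ℝ) × (Fin L → ℝ)) : ℝ :=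
  ((1 / (w : ℝ)) * ∑ j ∈ Finset.range w,
      (1 - (1 - (1 / (w : ℝ)) * ∑ k ∈ Finset.range w,
        extZ L ps.1 (((i : ℕ) : ℤ) + (j : ℤ) - (k : ℤ))) ^ (dr - 1))) ^ (dl - 1) *
    Real.exp (-β * (1 - (1 / (w : ℝ)) * ∑ j ∈ Finset.range w,
      (1 - (1 - ε) * (1 - (1 / (w : ℝ)) * ∑ k ∈ Finset.range w,
        extZ L ps.2 (((i : ℕ) : ℤ) + (j : ℤ) - (k : ℤ))) ^ (dg - 1))))

lemma extZ_zero' (L : ℕ) (m : ℤ) : extZ L (0 : Fin L → ℝ) m = 0 := by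
  simp [extZ]

lemma extZ_single' (L : ℕ) (j : Fin L) (t : ℝ) (m : ℤ) :
    extZ L (t • (Pi.single j 1 : Fin L → ℝ)) m
      = if ((j : ℕ) : ℤ) = m then t else 0 := by
  unfold extZ
  rw [Finset.sum_eq_single j]
  · simp [Pi.single_apply]
  · intro k _ hk
    simp [Pi.single_apply, hk]
  · simp

lemma count_lemma' (w : ℕ) (d : ℤ) :
    ((Finset.range w).filter (fun a : ℕ => 0 ≤ d + a ∧ d + a < w)).card
      = (w - |d|).toNat := by
  have h : (Finset.range w).filter (fun a : ℕ => 0 ≤ d + a ∧ d + a < w)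
      = Finset.Ico ((-d).toNat) (min w ((w - d).toNat)) := by
    ext a
    simp only [Finset.mem_filter, Finset.mem_range, Finset.mem_Ico, lt_min_iff]
    omega
  rw [h, Nat.card_Ico]
  rcases le_or_gt 0 d with hd | hd
  · rw [abs_of_nonneg hd]; omega
  · rw [abs_of_neg hd]; omega


/-- Jacobian of density evolution at the zero fixed point,
`d_l = 2`: the partial derivative of `F_i` with respect to `p_j` at
`(p, s) = (0, 0)` equals `(d_r - 1) exp(-β(1-ε)) (w - |i-j|)/w²` if
`|i - j| ≤ w`, and `0` otherwise. -/
theorem stmt_16 (L w dl dr dg : ℕ) (hL : 1 ≤ L) (hw : 1 ≤ w) (hdl : dl = 2)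
    (hdr : 2 ≤ dr) (hdg : 2 ≤ dg) (ε β : ℝ) (hε : ε ∈ Set.Icc (0 : ℝ) 1)
    (hβ : 0 ≤ β) :
    ∀ i j : Fin L,
      deriv (fun t : ℝ => Fmap L w dl dr dg ε β i (t • (Pi.single j 1 : Fin L → ℝ), (0 : Fin L → ℝ))) 0 =
        if |((i : ℕ) : ℝ) - ((j : ℕ) : ℝ)| ≤ (w : ℝ) then
          ((dr : ℝ) - 1) * Real.exp (-β * (1 - ε)) *
            ((w : ℝ) - |((i : ℕ) : ℝ) - ((j : ℕ) : ℝ)|) / (w : ℝ) ^ 2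
        else 0 := by
  intro i j
  have hw0 : (w : ℝ) ≠ 0 := Nat.cast_ne_zero.mpr (by omega)
  set C : ℝ := Real.exp (-β * (1 - ε)) with hC
  -- the indicator weights
  set m : ℕ → ℝ := fun a => ∑ k ∈ Finset.range w,
      if ((j : ℕ) : ℤ) = ((i : ℕ) : ℤ) + (a : ℤ) - (k : ℤ) then (1:ℝ) else 0 with hm
  -- rewrite the function
  have hfun : (fun t : ℝ => Fmap L w dl dr dg ε β i
      (t • (Pi.single j 1 : Fin L → ℝ), (0 : Fin L → ℝ)))
      = fun t : ℝ =>
        (1 / (w:ℝ) * ∑ a ∈ Finset.range w, (1 - (1 - 1/(w:ℝ) * (t * m a)) ^ (dr - 1))) * C := by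
    funext t
    unfold Fmap
    simp only [hdl, extZ_zero', extZ_single']
    have hexp : Real.exp (-β * (1 - (1 / (w:ℝ)) * ∑ _a ∈ Finset.range w,
        (1 - (1 - ε) * (1 - (1 / (w:ℝ)) * ∑ _k ∈ Finset.range w, (0:ℝ)) ^ (dg - 1)))) = C := by
      rw [hC]
      congr 1
      rw [Finset.sum_const, Finset.sum_const]
      simp only [Finset.card_range, nsmul_eq_mul, mul_zero]
      field_simp
      rw [sub_zero, one_pow]; ring
    rw [hexp]
    have hbase : ∀ a : ℕ, (∑ k ∈ Finset.range w,
        (if ((j : ℕ) : ℤ) = ((i : ℕ) : ℤ) + (a : ℤ) - (k : ℤ) then t else 0)) = t * m a := by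
      intro a
      rw [hm]
      show _ = t * ∑ k ∈ Finset.range w,
        (if ((j : ℕ) : ℤ) = ((i : ℕ) : ℤ) + (a : ℤ) - (k : ℤ) then (1:ℝ) else 0)
      rw [Finset.mul_sum]
      exact Finset.sum_congr rfl fun k _ => by split <;> ring
    simp only [hbase]
    rw [show (2 - 1 : ℕ) = 1 from rfl, pow_one]
  rw [hfun]
  -- the derivative
  have hder : HasDerivAt (fun t : ℝ =>
      (1 / (w:ℝ) * ∑ a ∈ Finset.range w, (1 - (1 - 1/(w:ℝ) * (t * m a)) ^ (dr - 1))) * C)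
      ((1 / (w:ℝ) * ∑ a ∈ Finset.range w, ((dr:ℝ) - 1) * (1/(w:ℝ) * m a)) * C) 0 := by
    have h : ∀ a ∈ Finset.range w,
        HasDerivAt (fun t : ℝ => 1 - (1 - 1/(w:ℝ) * (t * m a)) ^ (dr - 1))
          (((dr:ℝ) - 1) * (1/(w:ℝ) * m a)) 0 := by
      intro a _
      have h1 : HasDerivAt (fun t : ℝ => 1 - 1/(w:ℝ) * (t * m a)) (-(1/(w:ℝ) * m a)) 0 := by
        have := ((hasDerivAt_id (0:ℝ)).mul_const (m a)).const_mul (1/(w:ℝ))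
        simpa using this.const_sub 1
      have h2 := (h1.pow (dr - 1)).const_sub 1
      refine HasDerivAt.congr_deriv h2 ?_
      have e1 : ((1:ℝ) - 1/(w:ℝ) * (0 * m a)) = 1 := by ring
      rw [e1, one_pow]
      have e2 : ((dr - 1 : ℕ) : ℝ) = (dr : ℝ) - 1 := by
        push_cast [Nat.cast_sub (by omega : 1 ≤ dr)]; ring
      rw [e2]; ring
    exact ((HasDerivAt.fun_sum h).const_mul (1/(w:ℝ))).mul_const C
  rw [hder.deriv]
  -- compute the sum of m's
  have hma : ∀ a : ℕ, m a =
      if 0 ≤ ((i : ℕ) : ℤ) - ((j : ℕ) : ℤ) + a ∧ ((i : ℕ) : ℤ) - ((j : ℕ) : ℤ) + a < w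
      then (1:ℝ) else 0 := by
    intro a
    rw [hm]
    show (∑ k ∈ Finset.range w,
        (if ((j : ℕ) : ℤ) = ((i : ℕ) : ℤ) + (a : ℤ) - (k : ℤ) then (1:ℝ) else 0)) = _
    split
    · rename_i hcond
      rw [Finset.sum_eq_single ((((i:ℕ):ℤ) + a - (j:ℕ)).toNat)]
      · rw [if_pos (by omega)]
      · intro k hk hkne
        rw [if_neg]
        simp only [Finset.mem_range] at hk
        omega
      · intro hnot
        simp only [Finset.mem_range] at hnot
        omega
    · rename_i hcond
      apply Finset.sum_eq_zero
      intro k hk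
      simp only [Finset.mem_range] at hk
      rw [if_neg]
      omega
  have hsum : ∑ a ∈ Finset.range w, m a
      = (((w : ℤ) - |((i : ℕ) : ℤ) - ((j : ℕ) : ℤ)|).toNat : ℝ) := by
    rw [Finset.sum_congr rfl (fun a _ => hma a), Finset.sum_boole,
      count_lemma' w (((i : ℕ) : ℤ) - ((j : ℕ) : ℤ))]
  -- final algebra
  rw [Finset.mul_sum]
  have : ∑ a ∈ Finset.range w, (1/(w:ℝ)) * (((dr:ℝ) - 1) * (1/(w:ℝ) * m a))
      = ((dr:ℝ) - 1) / (w:ℝ)^2 * ∑ a ∈ Finset.range w, m a := by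
    rw [Finset.mul_sum]
    apply Finset.sum_congr rfl
    intro a _
    ring
  rw [this, hsum]
  set d : ℤ := ((i : ℕ) : ℤ) - ((j : ℕ) : ℤ) with hd
  have habs : |((i : ℕ) : ℝ) - ((j : ℕ) : ℝ)| = ((|d| : ℤ) : ℝ) := by
    rw [Int.cast_abs, hd]
    push_cast
    ring_nf
  rw [habs]
  have hcomp : (((|d| : ℤ) : ℝ) ≤ (w : ℝ)) ↔ |d| ≤ (w : ℤ) := by
    exact_mod_cast Iff.rfl
  by_cases hle : |d| ≤ (w : ℤ)
  · rw [if_pos (hcomp.mpr hle)]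
    have : (((w : ℤ) - |d|).toNat : ℝ) = (w : ℝ) - ((|d| : ℤ) : ℝ) := by
      have h0 : (0:ℤ) ≤ (w:ℤ) - |d| := by omega
      have h1 : ((((w:ℤ) - |d|).toNat : ℤ)) = (w:ℤ) - |d| := Int.toNat_of_nonneg h0
      exact_mod_cast congrArg (fun z : ℤ => (z : ℝ)) h1
    rw [this]; ring
  · rw [if_neg (fun hc => hle (hcomp.mp hc))]
    have : ((w : ℤ) - |d|).toNat = 0 := by omega
    rw [this]
    norm_num
end
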